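/- Let V be a finite set, E ⊆ V × V, in, out : V → ℕ, let B be the associated bipartite graph with sides O and I, fix v* ∈ V, and let K be a field of characteristic 2. In the multivariate polynomial ring over K with one variable x_{(o,i)} for each pair (o,i) ∈ O × I, the following identity holds: ∑_{X ⊆ V, v* ∈ X} P_X · P_{V∖X} = ∑_{M} ∏_{o∈O} x_{(o, M(o))}, where the right-hand sum ranges over all connected perfect matchings M of B, and for Y ⊆ V, P_Y = ∑_{M} ∏_{o ∈ O_Y} x_{(o, M(o))} with the sum ranging over all perfect matchings M of B[Y]. -/

import Mathlib

open Finset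

variable {V : Type*} [Fintype V] [DecidableEq V]

/-- The left side `O` of the bipartite graph `B`: pairs `(v, i)` with `1 ≤ i ≤ dout v`. -/
abbrev OSide (dout : V → ℕ) := Σ v : V, Fin (dout v)

/-- The right side `I` of the bipartite graph `B`: pairs `(v, j)` with `1 ≤ j ≤ din v`. -/
abbrev ISide (din : V → ℕ) := Σ v : V, Fin (din v)

/-- A perfect matching of the bipartite graph `B`: a bijection from `O` to `I` such that
every matched pair projects to an edge of `E`. -/
def IsPerfectMatching (E : Set (V × V)) (din dout : V → ℕ)
    (M : OSide dout ≃ ISide din) : Prop :=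
  ∀ o : OSide dout, (o.1, (M o).1) ∈ E

/-- The simple graph on `V` induced by a matching `M`: distinct `u`, `v` are adjacent iff
some `o` satisfies `{π_O(o), π_I(M(o))} = {u, v}`. -/
def matchingGraph (din dout : V → ℕ)
    (M : OSide dout ≃ ISide din) : SimpleGraph V where
  Adj u v := u ≠ v ∧ ∃ o : OSide dout,
    (o.1 = u ∧ (M o).1 = v) ∨ (o.1 = v ∧ (M o).1 = u)
  symm := by
    constructor
    intro u v h
    obtain ⟨huv, o, ho⟩ := h
    exact ⟨huv.symm, o, ho.symm⟩
  loopless := by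
    constructor
    intro v h
    exact h.1 rfl

/-- For `Y ⊆ V`, the polynomial `P_Y = ∑_{M ∈ PM(B[Y])} ∏_{o ∈ O_Y} x_{(o, M(o))}`, where the
sum ranges over all perfect matchings of the induced bipartite graph `B[Y]`. -/
noncomputable def inducedMatchingPoly (E : Set (V × V)) (din dout : V → ℕ)
    (K : Type*) [Field K] (Y : Finset V) :
    MvPolynomial (OSide dout × ISide din) K :=
  ∑ᶠ M ∈ {M : {o : OSide dout // o.1 ∈ Y} ≃ {i : ISide din // i.1 ∈ Y} |
        ∀ o : {o : OSide dout // o.1 ∈ Y}, ((o : OSide dout).1, ((M o : ISide din)).1) ∈ E},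
    ∏ o : {o : OSide dout // o.1 ∈ Y},
      MvPolynomial.X ((o : OSide dout), ((M o) : ISide din))

section Glue

variable {din dout : V → ℕ} (X : Finset V)
  (M1 : {o : OSide dout // o.1 ∈ X} ≃ {i : ISide din // i.1 ∈ X})
  (M2 : {o : OSide dout // o.1 ∈ Xᶜ} ≃ {i : ISide din // i.1 ∈ Xᶜ})

/-- Glue matchings on `X` and `Xᶜ` into one bijection. -/
noncomputable def glue : OSide dout ≃ ISide din where
  toFun o := if h : o.1 ∈ X then (M1 ⟨o, h⟩ : ISide din)
    else (M2 ⟨o, Finset.mem_compl.2 h⟩ : ISide din)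
  invFun i := if h : i.1 ∈ X then (M1.symm ⟨i, h⟩ : OSide dout)
    else (M2.symm ⟨i, Finset.mem_compl.2 h⟩ : OSide dout)
  left_inv o := by
    dsimp only
    by_cases h : o.1 ∈ X
    · rw [dif_pos h, dif_pos (M1 ⟨o, h⟩).2]
      simp
    · rw [dif_neg h, dif_neg (Finset.mem_compl.1 (M2 ⟨o, Finset.mem_compl.2 h⟩).2)]
      simp
  right_inv i := by
    dsimp only
    by_cases h : i.1 ∈ X
    · rw [dif_pos h, dif_pos (M1.symm ⟨i, h⟩).2]
      simp
    · rw [dif_neg h, dif_neg (Finset.mem_compl.1 (M2.symm ⟨i, Finset.mem_compl.2 h⟩).2)]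
      simp

theorem glue_apply_mem {o : OSide dout} (h : o.1 ∈ X) :
    glue X M1 M2 o = (M1 ⟨o, h⟩ : ISide din) := dif_pos h

theorem glue_apply_not_mem {o : OSide dout} (h : o.1 ∈ Xᶜ) :
    glue X M1 M2 o = (M2 ⟨o, h⟩ : ISide din) := by
  have h' : ¬ o.1 ∈ X := Finset.mem_compl.1 h
  simp only [glue, Equiv.coe_fn_mk, dif_neg h']

end Glue

section Split

variable {din dout : V → ℕ} (X : Finset V) (M : OSide dout ≃ ISide din)
  (h : ∀ o : OSide dout, o.1 ∈ X ↔ (M o).1 ∈ X)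

/-- Restrict a bijection preserving `X` to the `X` part. -/
def split1 : {o : OSide dout // o.1 ∈ X} ≃ {i : ISide din // i.1 ∈ X} :=
  Equiv.subtypeEquiv M h

/-- Restrict a bijection preserving `X` to the `Xᶜ` part. -/
def split2 : {o : OSide dout // o.1 ∈ Xᶜ} ≃ {i : ISide din // i.1 ∈ Xᶜ} :=
  Equiv.subtypeEquiv M (fun o => by
    simp only [Finset.mem_compl]
    exact not_congr (h o))

theorem glue_split : glue X (split1 X M h) (split2 X M h) = M := by
  apply Equiv.ext
  intro o
  by_cases ho : o.1 ∈ X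
  · rw [glue_apply_mem X _ _ ho]; rfl
  · rw [glue_apply_not_mem X _ _ (Finset.mem_compl.2 ho)]; rfl

variable (M1 : {o : OSide dout // o.1 ∈ X} ≃ {i : ISide din // i.1 ∈ X})
  (M2 : {o : OSide dout // o.1 ∈ Xᶜ} ≃ {i : ISide din // i.1 ∈ Xᶜ})

theorem glue_preserves : ∀ o : OSide dout, o.1 ∈ X ↔ (glue X M1 M2 o).1 ∈ X := by
  intro o
  by_cases ho : o.1 ∈ X
  · rw [glue_apply_mem X _ _ ho]
    exact ⟨fun _ => (M1 ⟨o, ho⟩).2, fun _ => ho⟩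
  · have ho' : o.1 ∈ Xᶜ := Finset.mem_compl.2 ho
    rw [glue_apply_not_mem X _ _ ho']
    exact ⟨fun hx => absurd hx ho, fun hx => absurd hx (Finset.mem_compl.1 (M2 ⟨o, ho'⟩).2)⟩

theorem split1_glue : split1 X (glue X M1 M2) (glue_preserves X M1 M2) = M1 := by
  apply Equiv.ext
  intro o
  apply Subtype.ext
  show glue X M1 M2 (o : OSide dout) = _
  rw [glue_apply_mem X _ _ o.2]

theorem split2_glue : split2 X (glue X M1 M2) (glue_preserves X M1 M2) = M2 := by
  apply Equiv.ext
  intro o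
  apply Subtype.ext
  show glue X M1 M2 (o : OSide dout) = _
  rw [glue_apply_not_mem X _ _ o.2]

end Split

section Weight

variable {α : Type*} [CommMonoid α] {din dout : V → ℕ} (X : Finset V)
  (M1 : {o : OSide dout // o.1 ∈ X} ≃ {i : ISide din // i.1 ∈ X})
  (M2 : {o : OSide dout // o.1 ∈ Xᶜ} ≃ {i : ISide din // i.1 ∈ Xᶜ})

theorem prod_glue (f : (o : OSide dout) → ISide din → α) :
    ∏ o : OSide dout, f o (glue X M1 M2 o) =
      (∏ o : {o : OSide dout // o.1 ∈ X}, f o (M1 o)) *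
        ∏ o : {o : OSide dout // o.1 ∈ Xᶜ}, f o (M2 o) := by
  classical
  rw [← Fintype.prod_subtype_mul_prod_subtype (fun o : OSide dout => o.1 ∈ X)
    (fun o => f o (glue X M1 M2 o))]
  congr 1
  · apply Fintype.prod_congr
    intro o
    rw [glue_apply_mem X _ _ o.2]
  · apply Fintype.prod_equiv (Equiv.subtypeEquivRight
      (fun o : OSide dout => (Finset.mem_compl (s := X)).symm))
    intro i
    rw [glue_apply_not_mem X _ _ (Finset.mem_compl.2 i.2)]
    rfl

end Weight

section Main

variable (E : Set (V × V)) (din dout : V → ℕ)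

/-- Perfect matchings preserving a subset `X`. -/
noncomputable def PMs (X : Finset V) : Finset (OSide dout ≃ ISide din) :=
  Set.Finite.toFinset (Set.toFinite {M : OSide dout ≃ ISide din |
    IsPerfectMatching E din dout M ∧ ∀ o : OSide dout, o.1 ∈ X ↔ (M o).1 ∈ X})

theorem mem_PMs {X : Finset V} {M : OSide dout ≃ ISide din} :
    M ∈ PMs E din dout X ↔
      IsPerfectMatching E din dout M ∧ ∀ o : OSide dout, o.1 ∈ X ↔ (M o).1 ∈ X :=
  Set.Finite.mem_toFinset _

variable (K : Type*) [Field K]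

theorem mul_eq_sum_PMs (X : Finset V) :
    inducedMatchingPoly E din dout K X * inducedMatchingPoly E din dout K Xᶜ =
      ∑ M ∈ PMs E din dout X, ∏ o : OSide dout, MvPolynomial.X (o, M o) := by
  rw [inducedMatchingPoly, inducedMatchingPoly,
    finsum_mem_eq_finite_toFinset_sum _ (Set.toFinite _),
    finsum_mem_eq_finite_toFinset_sum _ (Set.toFinite _), Finset.sum_mul_sum,
    ← Finset.sum_product']
  refine Finset.sum_bij' (fun p _ => glue X p.1 p.2)
    (fun M hM => (split1 X M (mem_PMs E din dout |>.1 hM).2,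
      split2 X M (mem_PMs E din dout |>.1 hM).2)) ?_ ?_ ?_ ?_ ?_
  · intro p hp
    rw [Finset.mem_product, Set.Finite.mem_toFinset, Set.Finite.mem_toFinset] at hp
    rw [mem_PMs]
    refine ⟨?_, glue_preserves X p.1 p.2⟩
    intro o
    by_cases ho : o.1 ∈ X
    · rw [glue_apply_mem X _ _ ho]; exact hp.1 ⟨o, ho⟩
    · rw [glue_apply_not_mem X _ _ (Finset.mem_compl.2 ho)]
      exact hp.2 ⟨o, Finset.mem_compl.2 ho⟩
  · intro M hM
    obtain ⟨hPM, hpres⟩ := (mem_PMs E din dout).1 hM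
    rw [Finset.mem_product, Set.Finite.mem_toFinset, Set.Finite.mem_toFinset]
    exact ⟨fun o => hPM o, fun o => hPM o⟩
  · intro p hp
    exact Prod.ext (split1_glue X p.1 p.2) (split2_glue X p.1 p.2)
  · intro M hM
    exact glue_split X M ((mem_PMs E din dout).1 hM).2
  · intro p hp
    exact (prod_glue X p.1 p.2 (fun o i => MvPolynomial.X (o, i))).symm

end Main

section Graph

variable {din dout : V → ℕ} {M : OSide dout ≃ ISide din} {X : Finset V}

theorem closed_of_pres (h : ∀ o : OSide dout, o.1 ∈ X ↔ (M o).1 ∈ X) :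
    ∀ u v : V, (matchingGraph din dout M).Adj u v → (u ∈ X ↔ v ∈ X) := by
  rintro u v ⟨-, o, ⟨h1, h2⟩ | ⟨h1, h2⟩⟩
  · rw [← h1, ← h2]; exact h o
  · rw [← h1, ← h2]; exact (h o).symm

theorem pres_of_closed (h : ∀ u v : V, (matchingGraph din dout M).Adj u v → (u ∈ X ↔ v ∈ X)) :
    ∀ o : OSide dout, o.1 ∈ X ↔ (M o).1 ∈ X := by
  intro o
  by_cases he : o.1 = (M o).1
  · rw [he]
  · exact h _ _ ⟨he, o, Or.inl ⟨rfl, rfl⟩⟩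

theorem iff_of_reachable {G : SimpleGraph V}
    (h : ∀ u v : V, G.Adj u v → (u ∈ X ↔ v ∈ X)) {u v : V} (hr : G.Reachable u v) :
    u ∈ X ↔ v ∈ X := by
  refine hr.elim fun p => ?_
  clear hr
  induction p with
  | nil => exact Iff.rfl
  | cons ha _ ih => exact (h _ _ ha).trans ih

end Graph

section Compat

variable (din dout : V → ℕ)

/-- The subsets containing `vstar` preserved by `M`. -/
noncomputable def compat (M : OSide dout ≃ ISide din) (vstar : V) : Finset (Finset V) :=
  (Set.toFinite {X : Finset V | vstar ∈ X ∧
    ∀ o : OSide dout, o.1 ∈ X ↔ (M o).1 ∈ X}).toFinset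

theorem mem_compat {M : OSide dout ≃ ISide din} {vstar : V} {X : Finset V} :
    X ∈ compat din dout M vstar ↔
      vstar ∈ X ∧ ∀ o : OSide dout, o.1 ∈ X ↔ (M o).1 ∈ X :=
  Set.Finite.mem_toFinset _

theorem compat_of_connected {M : OSide dout ≃ ISide din} {vstar : V}
    (hc : (matchingGraph din dout M).Connected) :
    compat din dout M vstar = {Finset.univ} := by
  ext X
  rw [mem_compat, Finset.mem_singleton]
  constructor
  · rintro ⟨hv, hpres⟩
    apply Finset.eq_univ_of_forall
    intro w
    exact (iff_of_reachable (closed_of_pres hpres) (hc.preconnected vstar w)).1 hv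
  · rintro rfl
    exact ⟨Finset.mem_univ _, fun o => by simp⟩

theorem sum_compat_of_not_connected {M : OSide dout ≃ ISide din} {vstar : V}
    (hc : ¬ (matchingGraph din dout M).Connected)
    {R : Type*} [Semiring R] [CharP R 2] (c : R) :
    ∑ _X ∈ compat din dout M vstar, c = 0 := by
  set G := matchingGraph din dout M with hG
  have hnp : ¬ G.Preconnected := by
    intro hp
    have : Nonempty V := ⟨vstar⟩
    exact hc ⟨hp⟩
  have hex : ∃ w : V, ¬ G.Reachable vstar w := by
    by_contra hall
    push_neg at hall
    apply hnp
    intro u v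
    exact (hall u).symm.trans (hall v)
  set C : Finset V := (Set.toFinite {w : V | G.Reachable vstar w}).toFinset with hC
  have hmemC : ∀ w : V, w ∈ C ↔ G.Reachable vstar w := fun w => Set.Finite.mem_toFinset _
  set D : Finset V := Cᶜ with hD
  have hvC : vstar ∈ C := (hmemC vstar).2 (SimpleGraph.Reachable.refl vstar)
  have hvD : vstar ∉ D := by
    rw [hD, Finset.mem_compl]
    exact not_not.2 hvC
  have hDne : D ≠ ⊥ := by
    obtain ⟨w, hw⟩ := hex
    intro h0
    have : w ∈ D := by rw [hD, Finset.mem_compl, hmemC]; exact hw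
    rw [h0] at this
    exact absurd this (Finset.notMem_empty w)
  have hpresD : ∀ o : OSide dout, o.1 ∈ D ↔ (M o).1 ∈ D := by
    have hclosedC : ∀ u v : V, G.Adj u v → (u ∈ C ↔ v ∈ C) := by
      intro u v huv
      rw [hmemC, hmemC]
      exact ⟨fun h => h.trans huv.reachable, fun h => h.trans huv.symm.reachable⟩
    have := pres_of_closed (X := C) hclosedC
    intro o
    rw [hD, Finset.mem_compl, Finset.mem_compl]
    exact not_congr (this o)
  refine Finset.sum_involution (fun X _ => symmDiff X D) (fun X _ => CharTwo.add_self_eq_zero c)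
    (fun X hX hc' => ?_) (fun X hX => ?_) (fun X hX => symmDiff_symmDiff_cancel_right D X)
  · intro h
    exact hDne (symmDiff_eq_left.1 h)
  · rw [mem_compat] at hX ⊢
    constructor
    · rw [Finset.mem_symmDiff]
      exact Or.inl ⟨hX.1, hvD⟩
    · intro o
      rw [Finset.mem_symmDiff, Finset.mem_symmDiff, hX.2 o, hpresD o]

end Compat


/-- Over a field of characteristic 2,
`∑_{X ⊆ V, v* ∈ X} P_X · P_{V∖X}` equals the generating polynomial of connected perfect
matchings `∑_{M connected PM} ∏_{o ∈ O} x_{(o, M(o))}`. -/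
theorem cut_and_count_identity
    (E : Set (V × V)) (din dout : V → ℕ) (vstar : V)
    (K : Type*) [Field K] [CharP K 2] :
    ∑ X ∈ Finset.univ.filter (fun X : Finset V => vstar ∈ X),
        inducedMatchingPoly E din dout K X * inducedMatchingPoly E din dout K Xᶜ
    =
    ∑ᶠ M ∈ {M : OSide dout ≃ ISide din |
        IsPerfectMatching E din dout M ∧ (matchingGraph din dout M).Connected},
      ∏ o : OSide dout, MvPolynomial.X (o, M o) := by
  classical
  set w : (OSide dout ≃ ISide din) → MvPolynomial (OSide dout × ISide din) K :=
    fun M => ∏ o : OSide dout, MvPolynomial.X (o, M o) with hw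
  have e1 : ∀ X : Finset V, (if vstar ∈ X then ∑ M ∈ PMs E din dout X, w M else 0)
      = ∑ M : OSide dout ≃ ISide din,
          if vstar ∈ X ∧ M ∈ PMs E din dout X then w M else 0 := by
    intro X
    by_cases h : vstar ∈ X
    · simp only [h, if_true, true_and]
      rw [Finset.sum_ite_mem, Finset.univ_inter]
    · simp [h]
  have e2 : ∀ M : OSide dout ≃ ISide din,
      (∑ X : Finset V, if vstar ∈ X ∧ M ∈ PMs E din dout X then w M else 0)
      = if IsPerfectMatching E din dout M then
          ∑ _X ∈ compat din dout M vstar, w M else 0 := by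
    intro M
    by_cases hM : IsPerfectMatching E din dout M
    · rw [if_pos hM]
      rw [show (∑ _X ∈ compat din dout M vstar, w M)
          = ∑ X : Finset V, if X ∈ compat din dout M vstar then w M else 0 by
        rw [Finset.sum_ite_mem, Finset.univ_inter]]
      refine Finset.sum_congr rfl fun X _ => ?_
      refine if_congr ?_ rfl rfl
      rw [mem_PMs, mem_compat]
      tauto
    · rw [if_neg hM]
      refine Finset.sum_eq_zero fun X _ => ?_
      rw [if_neg]
      rintro ⟨-, h2⟩
      exact hM ((mem_PMs E din dout).1 h2).1
  have e3 : ∀ M : OSide dout ≃ ISide din,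
      (if IsPerfectMatching E din dout M then ∑ _X ∈ compat din dout M vstar, w M else 0)
      = if IsPerfectMatching E din dout M ∧ (matchingGraph din dout M).Connected
          then w M else 0 := by
    intro M
    by_cases hM : IsPerfectMatching E din dout M
    · by_cases hcon : (matchingGraph din dout M).Connected
      · rw [if_pos hM, if_pos ⟨hM, hcon⟩, compat_of_connected din dout hcon, Finset.sum_singleton]
      · rw [if_pos hM, if_neg (fun h => hcon h.2), sum_compat_of_not_connected din dout hcon]
    · rw [if_neg hM, if_neg (fun h => hM h.1)]
  calc ∑ X ∈ Finset.univ.filter (fun X : Finset V => vstar ∈ X),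
        inducedMatchingPoly E din dout K X * inducedMatchingPoly E din dout K Xᶜ
      = ∑ X ∈ Finset.univ.filter (fun X : Finset V => vstar ∈ X),
          ∑ M ∈ PMs E din dout X, w M := by
        refine Finset.sum_congr rfl fun X _ => ?_
        rw [mul_eq_sum_PMs E din dout K X, hw]
    _ = ∑ X : Finset V, if vstar ∈ X then ∑ M ∈ PMs E din dout X, w M else 0 :=
        Finset.sum_filter _ _
    _ = ∑ X : Finset V, ∑ M : OSide dout ≃ ISide din,
          if vstar ∈ X ∧ M ∈ PMs E din dout X then w M else 0 :=
        Finset.sum_congr rfl fun X _ => e1 X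
    _ = ∑ M : OSide dout ≃ ISide din, ∑ X : Finset V,
          if vstar ∈ X ∧ M ∈ PMs E din dout X then w M else 0 := Finset.sum_comm
    _ = ∑ M : OSide dout ≃ ISide din,
          if IsPerfectMatching E din dout M ∧ (matchingGraph din dout M).Connected
            then w M else 0 :=
        Finset.sum_congr rfl fun M _ => (e2 M).trans (e3 M)
    _ = ∑ M ∈ Finset.univ.filter (fun M : OSide dout ≃ ISide din =>
          IsPerfectMatching E din dout M ∧ (matchingGraph din dout M).Connected), w M :=
        (Finset.sum_filter _ _).symm
    _ = ∑ᶠ M ∈ {M : OSide dout ≃ ISide din |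
          IsPerfectMatching E din dout M ∧ (matchingGraph din dout M).Connected},
        ∏ o : OSide dout, MvPolynomial.X (o, M o) := by
        rw [finsum_mem_eq_finite_toFinset_sum _ (Set.toFinite _)]
        refine Finset.sum_congr ?_ fun M _ => rfl
        ext M
        simp [Set.Finite.mem_toFinset]
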